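/- Let μ, b ∈ ℝ and σ > 0, and let N(μ, σ²) denote the Gaussian measure on ℝ with mean μ and variance σ². Then ∫ max(0, x − b) dN(μ, σ²)(x) = (μ − b) · Φ((μ − b)/σ) + σ · φ((μ − b)/σ), where φ(z) = (1/√(2π)) exp(−z²/2) is the standard normal density and Φ(z) = ∫_{−∞}^{z} φ(u) du is the standard normal cumulative distribution function. -/

import Mathlib

open ProbabilityTheory MeasureTheory Real

/-- The standard normal density `φ(z) = (1/√(2π)) exp(−z²/2)`. -/
noncomputable def stdNormalPDF (z : ℝ) : ℝ :=
  (Real.sqrt (2 * Real.pi))⁻¹ * Real.exp (-z ^ 2 / 2)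

/-- The standard normal CDF `Φ(z) = ∫_{−∞}^z φ(u) du`. -/
noncomputable def stdNormalCDF (z : ℝ) : ℝ :=
  ∫ u in Set.Iic z, stdNormalPDF u

lemma stdNormalPDF_eq : stdNormalPDF = gaussianPDFReal 0 1 := by
  ext x
  simp [stdNormalPDF, gaussianPDFReal]

lemma stdNormalPDF_neg (x : ℝ) : stdNormalPDF (-x) = stdNormalPDF x := by
  simp [stdNormalPDF, neg_sq]

lemma stdNormalPDF_nonneg (x : ℝ) : 0 ≤ stdNormalPDF x := by
  rw [stdNormalPDF_eq]; exact gaussianPDFReal_nonneg 0 1 x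

lemma integrable_stdNormalPDF : Integrable stdNormalPDF := by
  rw [stdNormalPDF_eq]; exact integrable_gaussianPDFReal 0 1

lemma integrable_mul_stdNormalPDF : Integrable (fun x => x * stdNormalPDF x) := by
  have h := (integrable_mul_exp_neg_mul_sq (b := (1:ℝ)/2) one_half_pos).const_mul
    (Real.sqrt (2 * Real.pi))⁻¹
  refine h.congr (Filter.Eventually.of_forall fun x => ?_)
  simp only [stdNormalPDF]
  rw [show -(1/2 : ℝ) * x ^ 2 = -x ^ 2 / 2 by ring]
  ring

lemma hasDerivAt_neg_stdNormalPDF (x : ℝ) :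
    HasDerivAt (fun y => -stdNormalPDF y) (x * stdNormalPDF x) x := by
  have h1 : HasDerivAt (fun y : ℝ => -y ^ 2 / 2) (-x) x := by
    have := ((hasDerivAt_pow 2 x).neg).div_const 2
    refine this.congr_deriv ?_
    simp; ring
  have h2 := ((h1.exp).const_mul (Real.sqrt (2 * Real.pi))⁻¹).neg
  refine h2.congr_deriv ?_
  unfold stdNormalPDF
  ring

lemma tendsto_neg_stdNormalPDF :
    Filter.Tendsto (fun y => -stdNormalPDF y) Filter.atTop (nhds 0) := by
  have h1 : Filter.Tendsto (fun y : ℝ => -y ^ 2 / 2) Filter.atTop Filter.atBot := by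
    apply Filter.Tendsto.atBot_div_const (by norm_num)
    exact Filter.tendsto_neg_atBot_iff.mpr (Filter.tendsto_pow_atTop two_ne_zero)
  have h2 := (Real.tendsto_exp_atBot.comp h1).const_mul (Real.sqrt (2 * Real.pi))⁻¹
  rw [mul_zero] at h2
  simpa [stdNormalPDF] using h2.neg

lemma integral_Ioi_mul_stdNormalPDF (a : ℝ) :
    ∫ x in Set.Ioi a, x * stdNormalPDF x = stdNormalPDF a := by
  have := integral_Ioi_of_hasDerivAt_of_tendsto' (f := fun y => -stdNormalPDF y)
    (f' := fun x => x * stdNormalPDF x) (a := a)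
    (fun x _ => hasDerivAt_neg_stdNormalPDF x)
    integrable_mul_stdNormalPDF.integrableOn tendsto_neg_stdNormalPDF
  simpa using this

lemma integral_Ioi_stdNormalPDF (c : ℝ) :
    ∫ x in Set.Ioi (-c), stdNormalPDF x = stdNormalCDF c := by
  rw [stdNormalCDF, ← integral_comp_neg_Iic c stdNormalPDF]
  exact setIntegral_congr_fun measurableSet_Iic fun x _ => stdNormalPDF_neg x

/-- Closed form of the expected improvement of a Gaussian
`N(μ, σ²)` (with `σ > 0`) over an incumbent `b`:
`E[max(0, X − b)] = (μ − b) Φ((μ − b)/σ) + σ φ((μ − b)/σ)`. -/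
theorem expected_improvement_closed_form (μ b σ : ℝ) (hσ : 0 < σ) :
    ∫ x, max 0 (x - b) ∂(gaussianReal μ ⟨σ ^ 2, sq_nonneg σ⟩) =
      (μ - b) * stdNormalCDF ((μ - b) / σ) + σ * stdNormalPDF ((μ - b) / σ) := by
  set c : ℝ := (μ - b) / σ with hc
  have hσ' : σ ≠ 0 := ne_of_gt hσ
  -- reduce to the standard Gaussian via an affine map
  have hmap : gaussianReal μ ⟨σ ^ 2, sq_nonneg σ⟩
      = (gaussianReal 0 1).map (fun x => σ * x + μ) := by
    have h1 : (gaussianReal 0 1).map (σ * ·) = gaussianReal 0 ⟨σ ^ 2, sq_nonneg σ⟩ := by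
      rw [gaussianReal_map_const_mul]
      congr 1
      · ring
      · exact mul_one _
    have h2 : ((gaussianReal 0 (⟨σ ^ 2, sq_nonneg σ⟩ : NNReal)).map (· + μ))
        = gaussianReal μ ⟨σ ^ 2, sq_nonneg σ⟩ := by
      exact (gaussianReal_map_add_const μ).trans (by rw [zero_add])
    rw [← h2, ← h1, Measure.map_map (measurable_add_const μ) (measurable_const_mul σ)]
    rfl
  have hcont : Continuous fun x : ℝ => max 0 (x - b) :=
    continuous_const.max (continuous_id.sub continuous_const)
  rw [hmap, integral_map (measurable_const_mul σ |>.add_const μ).aemeasurable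
    hcont.aestronglyMeasurable]
  -- express the standard Gaussian integral as a Lebesgue integral with density
  rw [gaussianReal_of_var_ne_zero 0 one_ne_zero]
  have hpdf : gaussianPDF 0 1 = fun x => ((gaussianPDFReal 0 1 x).toNNReal : ENNReal) := by
    ext x; rfl
  rw [hpdf, integral_withDensity_eq_integral_smul
    ((measurable_gaussianPDFReal 0 1).real_toNNReal)]
  have hsm : ∀ x : ℝ, (gaussianPDFReal 0 1 x).toNNReal • max 0 ((fun x => σ * x + μ) x - b)
      = stdNormalPDF x * max 0 (σ * x + μ - b) := by
    intro x
    rw [stdNormalPDF_eq, NNReal.smul_def, Real.coe_toNNReal _ (gaussianPDFReal_nonneg 0 1 x)]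
    simp [smul_eq_mul]
  simp_rw [hsm]
  -- rewrite the integrand as an indicator
  have hσc : σ * c = μ - b := by rw [hc]; field_simp
  have hind : (fun x => stdNormalPDF x * max 0 (σ * x + μ - b))
      = Set.indicator (Set.Ioi (-c)) (fun x => σ * (x * stdNormalPDF x + c * stdNormalPDF x)) := by
    funext x
    have harg : σ * x + μ - b = σ * (x + c) := by rw [mul_add, hσc]; ring
    by_cases hx : -c < x
    · rw [Set.indicator_of_mem (Set.mem_Ioi.mpr hx)]
      have hxc : (0:ℝ) ≤ x + c := by linarith
      rw [harg, max_eq_right (mul_nonneg hσ.le hxc)]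
      ring
    · rw [Set.indicator_of_notMem (by simpa using hx)]
      push_neg at hx
      have hxc : x + c ≤ 0 := by linarith
      rw [harg, max_eq_left (mul_nonpos_of_nonneg_of_nonpos hσ.le hxc), mul_zero]
  rw [hind, integral_indicator measurableSet_Ioi, integral_const_mul, integral_add
    integrable_mul_stdNormalPDF.integrableOn
    ((integrable_stdNormalPDF.const_mul c).integrableOn),
    integral_const_mul, integral_Ioi_mul_stdNormalPDF, integral_Ioi_stdNormalPDF,
    stdNormalPDF_neg]
  rw [mul_add, ← mul_assoc, hσc]
  ring
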